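/- A subset A of a Euclidean space is nearly convex if and only if the relative interior of the convex hull of A is contained in A. -/

import Mathlib

open Set AffineSubspace Topology Filter

section NormedSpaceLemmas

variable {E : Type*} [NormedAddCommGroup E] [NormedSpace ℝ E] {s : Set E}

theorem myClosure_subset (hs : Convex ℝ s) {y : E} (hy : y ∈ interior s) :
    closure s ⊆ closure (interior s) := by
  intro x hx
  have htt : Tendsto (fun t : ℝ => x + t • (y - x)) (𝓝[>] 0) (𝓝 x) := by
    have h0 : Tendsto (fun t : ℝ => x + t • (y - x)) (𝓝 0) (𝓝 (x + (0:ℝ) • (y - x))) := by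
      apply Continuous.tendsto; fun_prop
    simpa using h0.mono_left nhdsWithin_le_nhds
  refine mem_closure_of_tendsto htt ?_
  have hIoc : Ioc (0:ℝ) 1 ∈ 𝓝[>] (0:ℝ) := Ioc_mem_nhdsGT_of_mem (by norm_num)
  filter_upwards [hIoc] with t ht
  exact hs.add_smul_sub_mem_interior' hx hy ht

theorem myInterior_subset (hs : Convex ℝ s) {y : E} (hy : y ∈ interior s) :
    interior (closure s) ⊆ interior s := by
  intro x hx
  have hcont : Continuous (fun ε : ℝ => x + ε • (x - y)) := by fun_prop
  have hev : ∀ᶠ ε : ℝ in 𝓝 0, x + ε • (x - y) ∈ interior (closure s) := by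
    have h0 : (x + (0:ℝ) • (x - y)) ∈ interior (closure s) := by simpa using hx
    exact (hcont.tendsto 0).eventually (isOpen_interior.eventually_mem (by simpa using hx))
  obtain ⟨ε, hz, hε⟩ : ∃ ε : ℝ, (x + ε • (x - y) ∈ closure s) ∧ 0 < ε := by
    have := ((hev.mono fun _ h => interior_subset h).filter_mono
      (nhdsWithin_le_nhds (s := Ioi (0:ℝ)))).and (eventually_mem_nhdsWithin)
    exact this.exists
  have hε1 : (0:ℝ) < 1 + ε := by linarith
  have key : (ε / (1 + ε)) • y + (1 / (1 + ε)) • (x + ε • (x - y)) = x := by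
    match_scalars <;> field_simp <;> ring
  have := hs.combo_interior_closure_subset_interior (a := ε / (1 + ε)) (b := 1 / (1 + ε))
    (by positivity) (by positivity) (by field_simp; ring)
  rw [← key]
  exact this (Set.add_mem_add (smul_mem_smul_set hy) (smul_mem_smul_set hz))

end NormedSpaceLemmas

variable {X : Type*} [NormedAddCommGroup X] [InnerProductSpace ℝ X] [FiniteDimensional ℝ X]

theorem aux_span (S : AffineSubspace ℝ X) [Nonempty S] {C : Set X} (hne : C.Nonempty)
    (hC : affineSpan ℝ C = S) : affineSpan ℝ (((↑) : S → X) ⁻¹' C) = ⊤ := by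
  subst hC
  haveI := hne.to_subtype
  exact affineSpan_coe_preimage_eq_top C

theorem master {C D : Set X} (hC : Convex ℝ C) (hD : Convex ℝ D) {p : X} (hp : p ∈ C)
    (hCD : C ⊆ D) (hDc : D ⊆ closure C) :
    intrinsicInterior ℝ D ⊆ C ∧ D ⊆ closure (intrinsicInterior ℝ D) ∧
      Convex ℝ (intrinsicInterior ℝ D) := by
  have hpD : p ∈ D := hCD hp
  haveI : Nonempty (affineSpan ℝ D) := ⟨⟨p, subset_affineSpan ℝ D hpD⟩⟩
  set S := affineSpan ℝ D with hS
  set p' : S := ⟨p, subset_affineSpan ℝ D hpD⟩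
  set φ := (AffineIsometryEquiv.constVSub ℝ p').symm
  set ψ : S.direction →ᵃ[ℝ] X := S.subtype.comp φ.toAffineEquiv.toAffineMap with hψ
  have hψeq : ∀ v, ψ v = ((φ v : S) : X) := fun v => rfl
  have hψiso : Isometry ψ := by
    have : Isometry (((↑) : S → X) ∘ φ) := isometry_subtype_coe.comp φ.isometry
    exact this
  have hemb : IsEmbedding ψ := hψiso.isEmbedding
  have hrange : Set.range ψ = (S : Set X) := by
    have : Set.range ψ = Set.range (((↑) : S → X) ∘ φ) := rfl
    rw [this, Set.range_comp, φ.surjective.range_eq, Set.image_univ, Subtype.range_coe]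
  -- span of C equals S
  have hspanC : affineSpan ℝ C = S := by
    refine le_antisymm (affineSpan_mono ℝ hCD) ?_
    refine affineSpan_le.mpr (hDc.trans ?_)
    exact closure_minimal (subset_affineSpan ℝ C)
      (affineSpan ℝ C).closed_of_finiteDimensional
  -- preimages in the direction space
  set tC : Set S.direction := ψ ⁻¹' C with htC
  set tD : Set S.direction := ψ ⁻¹' D with htD
  have hconvC : Convex ℝ tC := hC.affine_preimage ψ
  have hconvD : Convex ℝ tD := hD.affine_preimage ψ
  have hCS : C ⊆ (S : Set X) := hCD.trans (subset_affineSpan ℝ D)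
  have himgC : ψ '' tC = C := by
    rw [htC, Set.image_preimage_eq_inter_range, hrange, Set.inter_eq_left.mpr hCS]
  have hclosC : closure tC = ψ ⁻¹' (closure C) := by
    rw [hemb.closure_eq_preimage_closure_image, himgC]
  have htCD : tC ⊆ tD := fun v hv => hCD hv
  have htDc : tD ⊆ closure tC := fun v hv => by
    rw [hclosC]; exact hDc hv
  have hspan_tC : affineSpan ℝ tC = ⊤ := by
    have h1 : affineSpan ℝ (((↑) : S → X) ⁻¹' C) = ⊤ := aux_span S ⟨p, hp⟩ hspanC
    have h2 : tC = ⇑φ.toAffineEquiv ⁻¹' (((↑) : S → X) ⁻¹' C) := rfl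
    rw [h2, ← comap_span, h1, AffineSubspace.comap_top]
  obtain ⟨y, hy⟩ : (interior tC).Nonempty :=
    hconvC.interior_nonempty_iff_affineSpan_eq_top.mpr hspan_tC
  have hkey : intrinsicInterior ℝ D = ψ '' interior tD := by
    have h3 : interior tD = ⇑φ.toHomeomorph ⁻¹' interior (((↑) : S → X) ⁻¹' D) := by
      rw [Homeomorph.preimage_interior]; rfl
    have h4 : ψ '' interior tD
        = (↑) '' (⇑φ.toHomeomorph '' (⇑φ.toHomeomorph ⁻¹' interior (((↑) : S → X) ⁻¹' D))) := by
      rw [← h3, Set.image_image]; rfl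
    rw [intrinsicInterior, h4, Set.image_preimage_eq _ φ.toHomeomorph.surjective]
  have hintDC : interior tD ⊆ tC := fun v hv =>
    interior_subset (myInterior_subset hconvC hy (interior_mono htDc hv))
  refine ⟨?_, ?_, ?_⟩
  · rw [hkey]
    rintro x ⟨v, hv, rfl⟩
    rw [← himgC]
    exact ⟨v, hintDC hv, rfl⟩
  · intro x hx
    obtain ⟨v, rfl⟩ : x ∈ Set.range ψ := by rw [hrange]; exact subset_affineSpan ℝ D hx
    have hv : v ∈ closure (interior tD) :=
      closure_mono (interior_mono htCD) (myClosure_subset hconvC hy (htDc hx))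
    rw [hkey]
    exact image_closure_subset_closure_image hψiso.continuous ⟨v, hv, rfl⟩
  · rw [hkey]
    exact Convex.affine_image ψ hconvD.interior

def NearlyEqual (A B : Set X) : Prop :=
  closure A = closure B ∧ intrinsicInterior ℝ A = intrinsicInterior ℝ B

def NearlyConvex (A : Set X) : Prop :=
  ∃ C : Set X, Convex ℝ C ∧ C ⊆ A ∧ A ⊆ closure C

theorem nearlyConvex_iff_relint_convexHull_subset (A : Set X) :
    NearlyConvex A ↔ intrinsicInterior ℝ (convexHull ℝ A) ⊆ A := by
  constructor
  · rintro ⟨C, hC, hCA, hAc⟩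
    rcases A.eq_empty_or_nonempty with rfl | ⟨q, hq⟩
    · rw [convexHull_empty, intrinsicInterior_empty]
    · have hCne : C.Nonempty := by
        rcases C.eq_empty_or_nonempty with rfl | h
        · simpa using hAc hq
        · exact h
      obtain ⟨p, hp⟩ := hCne
      have h1 := (master hC (convex_convexHull ℝ A) hp (hCA.trans (subset_convexHull ℝ A))
        (convexHull_min hAc hC.closure)).1
      exact h1.trans hCA
  · intro h
    rcases A.eq_empty_or_nonempty with rfl | ⟨p, hp⟩
    · exact ⟨∅, convex_empty, Set.Subset.rfl, by simp⟩
    · obtain ⟨h1, h2, h3⟩ := master (convex_convexHull ℝ A) (convex_convexHull ℝ A)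
        (subset_convexHull ℝ A hp) subset_rfl subset_closure
      exact ⟨intrinsicInterior ℝ (convexHull ℝ A), h3, h, (subset_convexHull ℝ A).trans h2⟩
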